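/- For any odd prime p, ∑_{k=0}^{p-1} ((-1)^k / 8^k) · ∑_{j=0}^{k} C(2j,j)·C(2k-2j,k-j)·(6j+1)·(6k-6j+1) ≡ -p/2 (mod p²). -/

import Mathlib

open Finset

set_option linter.unusedSectionVars false

section aux
variable {F : Type*} [Field F] [CharZero F]

private def cb (F : Type*) [Field F] (j : ℕ) : F := ((2 * j).choose j : ℕ)

private lemma cb_rec (j : ℕ) : ((j : F) + 1) * cb F (j + 1) = (4 * j + 2) * cb F j := by
  have h : ((j + 1) * (2 * (j + 1)).choose (j + 1) : ℕ)
      = 2 * (2 * j + 1) * ((2 * j).choose j) := by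
    simpa [Nat.centralBinom] using Nat.succ_mul_centralBinom_succ j
  have h2 := congrArg (Nat.cast : ℕ → F) h
  push_cast at h2
  unfold cb
  linear_combination h2

private lemma shift1 (k : ℕ) :
    ∑ j ∈ range (k + 1 + 1), (j : F) * cb F j * cb F (k + 1 - j)
      = ∑ j ∈ range (k + 1), (4 * (j : F) + 2) * cb F j * cb F (k - j) := by
  rw [Finset.sum_range_succ']
  simp only [Nat.cast_zero, zero_mul, add_zero, Nat.succ_sub_succ]
  refine Finset.sum_congr rfl fun j _ => ?_
  push_cast
  linear_combination cb F (k - j) * cb_rec (F := F) j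

private lemma shift2 (k : ℕ) :
    ∑ j ∈ range (k + 1 + 1), (j : F) * (j : F) * cb F j * cb F (k + 1 - j)
      = ∑ j ∈ range (k + 1), ((j : F) + 1) * (4 * (j : F) + 2) * cb F j * cb F (k - j) := by
  rw [Finset.sum_range_succ']
  simp only [Nat.cast_zero, zero_mul, add_zero, Nat.succ_sub_succ]
  refine Finset.sum_congr rfl fun j _ => ?_
  push_cast
  linear_combination ((j : F) + 1) * cb F (k - j) * cb_rec (F := F) j

private lemma sym1 (m : ℕ) :
    2 * ∑ j ∈ range (m + 1), (j : F) * cb F j * cb F (m - j)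
      = (m : F) * ∑ j ∈ range (m + 1), cb F j * cb F (m - j) := by
  have h := Finset.sum_range_reflect (fun j => (j : F) * cb F j * cb F (m - j)) (m + 1)
  simp only [Nat.add_sub_cancel] at h
  have h' : ∑ j ∈ range (m + 1), ((m - j : ℕ) : F) * cb F (m - j) * cb F j
      = ∑ j ∈ range (m + 1), (j : F) * cb F j * cb F (m - j) := by
    calc ∑ j ∈ range (m + 1), ((m - j : ℕ) : F) * cb F (m - j) * cb F j
        = ∑ j ∈ range (m + 1), ((m - j : ℕ) : F) * cb F (m - j) * cb F (m - (m - j)) := by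
          refine Finset.sum_congr rfl fun j hj => ?_
          rw [Nat.sub_sub_self (Nat.lt_succ_iff.mp (Finset.mem_range.mp hj))]
      _ = ∑ j ∈ range (m + 1), (j : F) * cb F j * cb F (m - j) := h
  rw [two_mul]
  nth_rewrite 2 [← h']
  rw [← Finset.sum_add_distrib, Finset.mul_sum]
  refine Finset.sum_congr rfl fun j hj => ?_
  have hj' : j ≤ m := Nat.lt_succ_iff.mp (Finset.mem_range.mp hj)
  rw [Nat.cast_sub hj']
  ring

private lemma sw (k : ℕ) :
    (∑ j ∈ range (k + 1), cb F j * cb F (k - j)) = 4 ^ k ∧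
    (∑ j ∈ range (k + 1), (j : F) * cb F j * cb F (k - j)) = (k : F) * 4 ^ k / 2 ∧
    (∑ j ∈ range (k + 1), (j : F) * (j : F) * cb F j * cb F (k - j))
      = (k : F) * (3 * (k : F) + 1) * 4 ^ k / 8 := by
  induction k with
  | zero => norm_num [cb]
  | succ k ih =>
    obtain ⟨hs, h1, h2⟩ := ih
    have e1 : ∑ j ∈ range (k + 1), (4 * (j : F) + 2) * cb F j * cb F (k - j)
        = 4 * (∑ j ∈ range (k + 1), (j : F) * cb F j * cb F (k - j))
          + 2 * (∑ j ∈ range (k + 1), cb F j * cb F (k - j)) := by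
      rw [Finset.mul_sum, Finset.mul_sum, ← Finset.sum_add_distrib]
      exact Finset.sum_congr rfl fun j _ => by ring
    rw [h1, hs] at e1
    have e2 : ∑ j ∈ range (k + 1), ((j : F) + 1) * (4 * (j : F) + 2) * cb F j * cb F (k - j)
        = 4 * (∑ j ∈ range (k + 1), (j : F) * (j : F) * cb F j * cb F (k - j))
          + 6 * (∑ j ∈ range (k + 1), (j : F) * cb F j * cb F (k - j))
          + 2 * (∑ j ∈ range (k + 1), cb F j * cb F (k - j)) := by
      rw [Finset.mul_sum, Finset.mul_sum, Finset.mul_sum, ← Finset.sum_add_distrib,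
        ← Finset.sum_add_distrib]
      exact Finset.sum_congr rfl fun j _ => by ring
    rw [h2, h1, hs] at e2
    have hw1 : (∑ j ∈ range (k + 1 + 1), (j : F) * cb F j * cb F (k + 1 - j))
        = ((k : F) + 1) * 4 ^ (k + 1) / 2 := by
      rw [shift1, e1]; ring
    have hw2 : (∑ j ∈ range (k + 1 + 1), (j : F) * (j : F) * cb F j * cb F (k + 1 - j))
        = ((k : F) + 1) * (3 * ((k : F) + 1) + 1) * 4 ^ (k + 1) / 8 := by
      rw [shift2, e2]; ring
    have hs1 : (∑ j ∈ range (k + 1 + 1), cb F j * cb F (k + 1 - j)) = 4 ^ (k + 1) := by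
      have hsym := sym1 (F := F) (k + 1)
      rw [hw1] at hsym
      push_cast at hsym
      have hk : ((k : F) + 1) ≠ 0 := by
        have := (Nat.cast_ne_zero (R := F)).mpr (Nat.succ_ne_zero k)
        push_cast at this
        exact this
      apply mul_left_cancel₀ hk
      rw [← hsym]; ring
    refine ⟨hs1, ?_, ?_⟩
    · rw [hw1]; push_cast; ring
    · rw [hw2]; push_cast; ring

private lemma innerSumId (k : ℕ) :
    (∑ j ∈ range (k + 1), cb F j * cb F (k - j)
        * ((6 * j + 1 : ℕ) : F) * ((6 * (k - j) + 1 : ℕ) : F))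
      = 4 ^ k * (9 * (k : F) ^ 2 + 3 * (k : F) + 2) / 2 := by
  obtain ⟨hs, h1, h2⟩ := sw (F := F) k
  have e : (∑ j ∈ range (k + 1), cb F j * cb F (k - j)
        * ((6 * j + 1 : ℕ) : F) * ((6 * (k - j) + 1 : ℕ) : F))
      = 36 * (k : F) * (∑ j ∈ range (k + 1), (j : F) * cb F j * cb F (k - j))
        - 36 * (∑ j ∈ range (k + 1), (j : F) * (j : F) * cb F j * cb F (k - j))
        + (6 * (k : F) + 1) * (∑ j ∈ range (k + 1), cb F j * cb F (k - j)) := by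
    rw [Finset.mul_sum, Finset.mul_sum, Finset.mul_sum, ← Finset.sum_sub_distrib,
      ← Finset.sum_add_distrib]
    refine Finset.sum_congr rfl fun j hj => ?_
    have hj' : j ≤ k := Nat.lt_succ_iff.mp (Finset.mem_range.mp hj)
    push_cast [Nat.cast_sub hj']
    ring
  rw [e, hs, h1, h2]
  ring

private lemma outerSumId (n : ℕ) :
    (∑ k ∈ range n, ((-1) ^ k / 8 ^ k : F) * (4 ^ k * (9 * (k : F) ^ 2 + 3 * (k : F) + 2) / 2))
      = (-1) ^ n / 2 ^ n * ((n : F) - 3 * (n : F) ^ 2) := by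
  induction n with
  | zero => simp
  | succ n ih =>
    rw [Finset.sum_range_succ, ih]
    have h2 : (2 : F) ≠ 0 := two_ne_zero
    have h8 : (8 : F) ≠ 0 := by norm_num
    have h2n : (2 : F) ^ n ≠ 0 := pow_ne_zero _ h2
    have h8n : (8 : F) ^ n ≠ 0 := pow_ne_zero _ h8
    have key : (8 : F) ^ n = 2 ^ n * 4 ^ n := by
      rw [← mul_pow]; norm_num
    push_cast
    field_simp [key]
    rw [key]; ring
end aux

theorem stmt16 (p : ℕ) [Fact p.Prime] (hodd : Odd p) :
    ‖(∑ k ∈ range p, ((-1) ^ k / 8 ^ k : ℚ_[p]) *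
        ∑ j ∈ range (k + 1),
          (((2 * j).choose j : ℚ_[p]) * ((2 * (k - j)).choose (k - j) : ℚ_[p]) *
            ((6 * j + 1 : ℕ) : ℚ_[p]) * ((6 * (k - j) + 1 : ℕ) : ℚ_[p]))) -
      (-(p : ℚ_[p]) / 2)‖ ≤ ((p : ℝ) ^ 2)⁻¹ := by
  have hp : p.Prime := Fact.out
  have hp2 : p ≠ 2 := by
    rintro rfl
    simp [Nat.odd_iff] at hodd
  have h1 : (∑ k ∈ range p, ((-1) ^ k / 8 ^ k : ℚ_[p]) *
        ∑ j ∈ range (k + 1),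
          (((2 * j).choose j : ℚ_[p]) * ((2 * (k - j)).choose (k - j) : ℚ_[p]) *
            ((6 * j + 1 : ℕ) : ℚ_[p]) * ((6 * (k - j) + 1 : ℕ) : ℚ_[p])))
      = (-1) ^ p / 2 ^ p * ((p : ℚ_[p]) - 3 * (p : ℚ_[p]) ^ 2) := by
    rw [← outerSumId p]
    refine Finset.sum_congr rfl fun k _ => ?_
    congr 1
    have h := innerSumId (F := ℚ_[p]) k
    simp only [cb] at h
    exact h
  rw [h1]
  have hneg : (-1 : ℚ_[p]) ^ p = -1 := Odd.neg_one_pow hodd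
  set N : ℤ := 2 ^ (p - 1) - 1 + 3 * p with hN
  have hdvd : (p : ℤ) ∣ N := by
    have h2z : (2 : ZMod p) ≠ 0 := by
      intro h
      have h' : p ∣ 2 := by
        have := (ZMod.natCast_eq_zero_iff 2 p).mp (by exact_mod_cast h)
        exact this
      exact hp2 ((Nat.prime_dvd_prime_iff_eq hp Nat.prime_two).mp h')
    have hf : (2 : ZMod p) ^ (p - 1) = 1 := ZMod.pow_card_sub_one_eq_one h2z
    have hz : ((N : ℤ) : ZMod p) = 0 := by
      push_cast [hN]
      rw [hf, ZMod.natCast_self]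
      ring
    exact (ZMod.intCast_zmod_eq_zero_iff_dvd N p).mp hz
  have hD : (-1 : ℚ_[p]) ^ p / 2 ^ p * ((p : ℚ_[p]) - 3 * (p : ℚ_[p]) ^ 2) - (-(p : ℚ_[p]) / 2)
      = (p : ℚ_[p]) * (N : ℚ_[p]) / 2 ^ p := by
    rw [hneg]
    have hps : p - 1 + 1 = p := Nat.succ_pred_eq_of_pos hp.pos
    have h2 : (2 : ℚ_[p]) ≠ 0 := two_ne_zero
    have h2p : (2 : ℚ_[p]) ^ (p - 1) ≠ 0 := pow_ne_zero _ h2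
    have hpow : (2 : ℚ_[p]) ^ p = 2 ^ (p - 1) * 2 := by rw [← pow_succ, hps]
    push_cast [hN]
    rw [hpow]
    field_simp
    ring
  rw [hD, norm_div, norm_mul, norm_pow]
  have h2norm : ‖(2 : ℚ_[p])‖ = 1 := by
    have hle : ‖((2 : ℤ) : ℚ_[p])‖ ≤ 1 := Padic.norm_int_le_one 2
    have hnlt : ¬ ‖((2 : ℤ) : ℚ_[p])‖ < 1 := by
      rw [Padic.norm_intCast_lt_one_iff]
      intro hdvd2
      have hd : p ∣ 2 := by exact_mod_cast hdvd2
      exact hp2 ((Nat.prime_dvd_prime_iff_eq hp Nat.prime_two).mp hd)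
    have he : ‖((2 : ℤ) : ℚ_[p])‖ = 1 := le_antisymm hle (not_lt.mp hnlt)
    simpa using he
  rw [h2norm, one_pow, div_one, Padic.norm_p]
  have hNnorm : ‖(N : ℚ_[p])‖ ≤ (p : ℝ)⁻¹ := by
    have := (Padic.norm_int_le_pow_iff_dvd (p := p) N 1).mpr (by simpa using hdvd)
    simpa using this
  calc ((p : ℝ))⁻¹ * ‖(N : ℚ_[p])‖ ≤ (p : ℝ)⁻¹ * (p : ℝ)⁻¹ := by
        gcongr
      _ = ((p : ℝ) ^ 2)⁻¹ := by rw [sq, mul_inv]
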